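/- arXiv:1302.5187 — 6 statements merged into one kernel-verified Lean document; each statement's English description precedes it below -/
import Mathlib

section
/- Let (S,T),(U,V) be a twin cotorsion pair on B. If A ↣ B ↠ U is a short exact sequence with U ∈ U and A ∈ B⁻, then B ∈ B⁻. -/
open CategoryTheory Limits

universe v u

/-- An exact structure (Quillen exact category) on an additive category `C`:
a class of kernel-cokernel pairs (short exact sequences) satisfying Quillen's axioms. -/
structure ExactStructure (C : Type u) [Category.{v} C] [Preadditive C] where
  ses : ∀ ⦃X Y Z : C⦄, (X ⟶ Y) → (Y ⟶ Z) → Prop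
  comp_zero : ∀ ⦃X Y Z : C⦄ ⦃i : X ⟶ Y⦄ ⦃d : Y ⟶ Z⦄, ses i d → i ≫ d = 0
  is_kernel : ∀ ⦃X Y Z : C⦄ ⦃i : X ⟶ Y⦄ ⦃d : Y ⟶ Z⦄, ses i d →
    ∀ ⦃W : C⦄ (g : W ⟶ Y), g ≫ d = 0 → ∃! h : W ⟶ X, h ≫ i = g
  is_cokernel : ∀ ⦃X Y Z : C⦄ ⦃i : X ⟶ Y⦄ ⦃d : Y ⟶ Z⦄, ses i d →
    ∀ ⦃W : C⦄ (g : Y ⟶ W), i ≫ g = 0 → ∃! h : Z ⟶ W, d ≫ h = g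
  id_infl : ∀ X : C, ∃ (Z : C) (d : X ⟶ Z), ses (𝟙 X) d
  id_defl : ∀ X : C, ∃ (W : C) (i : W ⟶ X), ses i (𝟙 X)
  infl_comp : ∀ ⦃X Y Z : C⦄ (i : X ⟶ Y) (j : Y ⟶ Z),
    (∃ (A : C) (d : Y ⟶ A), ses i d) → (∃ (B : C) (e : Z ⟶ B), ses j e) →
    ∃ (A : C) (d : Z ⟶ A), ses (i ≫ j) d
  defl_comp : ∀ ⦃X Y Z : C⦄ (p : X ⟶ Y) (q : Y ⟶ Z),
    (∃ (A : C) (i : A ⟶ X), ses i p) → (∃ (B : C) (j : B ⟶ Y), ses j q) →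
    ∃ (A : C) (i : A ⟶ X), ses i (p ≫ q)
  pullback_defl : ∀ ⦃X Y Z : C⦄ ⦃i : X ⟶ Y⦄ ⦃d : Y ⟶ Z⦄, ses i d → ∀ ⦃Z' : C⦄ (f : Z' ⟶ Z),
    ∃ (Y' : C) (d' : Y' ⟶ Z') (g : Y' ⟶ Y), (∃ (X' : C) (i' : X' ⟶ Y'), ses i' d') ∧
      IsPullback d' g f d
  pushout_infl : ∀ ⦃X Y Z : C⦄ ⦃i : X ⟶ Y⦄ ⦃d : Y ⟶ Z⦄, ses i d → ∀ ⦃X' : C⦄ (g : X ⟶ X'),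
    ∃ (Y' : C) (i' : X' ⟶ Y') (g' : Y ⟶ Y'), (∃ (Z' : C) (d' : Y' ⟶ Z'), ses i' d') ∧
      IsPushout i g g' i'

variable {C : Type u} [Category.{v} C] [Preadditive C] [HasBinaryBiproducts C]

/-- `i` is an inflation (admissible monomorphism). -/
def ExactStructure.Inflation (E : ExactStructure C) {X Y : C} (i : X ⟶ Y) : Prop :=
  ∃ (Z : C) (d : Y ⟶ Z), E.ses i d

/-- `d` is a deflation (admissible epimorphism). -/
def ExactStructure.Deflation (E : ExactStructure C) {Y Z : C} (d : Y ⟶ Z) : Prop :=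
  ∃ (X : C) (i : X ⟶ Y), E.ses i d

/-- `Ext^1(X, Y) = 0`: every short exact sequence `Y ↣ M ↠ X` splits. -/
def ExactStructure.Ext1Zero (E : ExactStructure C) (X Y : C) : Prop :=
  ∀ ⦃M : C⦄ (i : Y ⟶ M) (d : M ⟶ X), E.ses i d → ∃ r : M ⟶ Y, i ≫ r = 𝟙 Y

/-- `P` is projective with respect to the exact structure. -/
def ExactStructure.Proj (E : ExactStructure C) (P : C) : Prop :=
  ∀ ⦃Y Z : C⦄ (d : Y ⟶ Z), E.Deflation d → ∀ g : P ⟶ Z, ∃ h : P ⟶ Y, h ≫ d = g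

/-- `I` is injective with respect to the exact structure. -/
def ExactStructure.Inj (E : ExactStructure C) (I : C) : Prop :=
  ∀ ⦃X Y : C⦄ (i : X ⟶ Y), E.Inflation i → ∀ g : X ⟶ I, ∃ h : Y ⟶ I, i ≫ h = g

def ExactStructure.EnoughProj (E : ExactStructure C) : Prop :=
  ∀ X : C, ∃ (P : C) (p : P ⟶ X), E.Proj P ∧ E.Deflation p

def ExactStructure.EnoughInj (E : ExactStructure C) : Prop :=
  ∀ X : C, ∃ (I : C) (i : X ⟶ I), E.Inj I ∧ E.Inflation i

/-- A class of objects is closed under direct summands (retracts). -/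
def ClosedUnderSummands (U : Set C) : Prop :=
  ∀ ⦃X Y : C⦄ (s : Y ⟶ X) (r : X ⟶ Y), s ≫ r = 𝟙 Y → X ∈ U → Y ∈ U

/-- A cotorsion pair `(U, V)` on an exact category. -/
structure IsCotorsionPair (E : ExactStructure C) (U V : Set C) : Prop where
  ext1 : ∀ ⦃A B : C⦄, A ∈ U → B ∈ V → E.Ext1Zero A B
  approx_left : ∀ B : C, ∃ (VB UB : C) (i : VB ⟶ UB) (d : UB ⟶ B),
    VB ∈ V ∧ UB ∈ U ∧ E.ses i d
  approx_right : ∀ B : C, ∃ (VB UB : C) (i : B ⟶ VB) (d : VB ⟶ UB),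
    VB ∈ V ∧ UB ∈ U ∧ E.ses i d
  summands_left : ClosedUnderSummands U
  summands_right : ClosedUnderSummands V

/-- The subcategory `B⁺` of a twin cotorsion pair, where `W = T ∩ U`. -/
def BPlus (E : ExactStructure C) (V W : Set C) : Set C :=
  fun B => ∃ (V' W' : C) (i : V' ⟶ W') (d : W' ⟶ B), V' ∈ V ∧ W' ∈ W ∧ E.ses i d

/-- The subcategory `B⁻` of a twin cotorsion pair, where `W = T ∩ U`. -/
def BMinus (E : ExactStructure C) (W S : Set C) : Set C :=
  fun B => ∃ (W' S' : C) (i : B ⟶ W') (d : W' ⟶ S'), W' ∈ W ∧ S' ∈ S ∧ E.ses i d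

/-- `f` factors through an object of `W`. -/
def FactorsThru (W : Set C) {X Y : C} (f : X ⟶ Y) : Prop :=
  ∃ (Z : C) (u : X ⟶ Z) (v : Z ⟶ Y), Z ∈ W ∧ u ≫ v = f

/-- A deflation in a short exact sequence is right-cancellable (an epimorphism). -/
lemma ses_epi_cancel (E : ExactStructure C) {X Y Z : C} {i : X ⟶ Y} {d : Y ⟶ Z}
    (hs : E.ses i d) {W : C} {a b : Z ⟶ W} (h : d ≫ a = d ≫ b) : a = b := by
  obtain ⟨h', -, huniq⟩ := E.is_cokernel hs (d ≫ a)
    (by rw [← Category.assoc, E.comp_zero hs, zero_comp])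
  exact (huniq a rfl).trans (huniq b h.symm).symm

/-- An inflation in a short exact sequence is left-cancellable (a monomorphism). -/
lemma ses_mono_cancel (E : ExactStructure C) {X Y Z : C} {i : X ⟶ Y} {d : Y ⟶ Z}
    (hs : E.ses i d) {W : C} {a b : W ⟶ X} (h : a ≫ i = b ≫ i) : a = b := by
  obtain ⟨h', -, huniq⟩ := E.is_kernel hs (a ≫ i)
    (by rw [Category.assoc, E.comp_zero hs, comp_zero])
  exact (huniq a rfl).trans (huniq b h.symm).symm

/-- The cokernel of the pushout of an inflation is isomorphic to the original cokernel. -/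
lemma pushout_coker_iso (E : ExactStructure C) {X Y Z X' Y' Z'' : C} {i : X ⟶ Y} {d : Y ⟶ Z}
    (hs : E.ses i d) {g : X ⟶ X'} {g' : Y ⟶ Y'} {i' : X' ⟶ Y'} (hPO : IsPushout i g g' i')
    {d' : Y' ⟶ Z''} (hs' : E.ses i' d') :
    ∃ (u : Z ⟶ Z'') (v : Z'' ⟶ Z), u ≫ v = 𝟙 Z ∧ v ≫ u = 𝟙 Z'' := by
  obtain ⟨u, hu, -⟩ := E.is_cokernel hs (g' ≫ d')
    (by rw [← Category.assoc, hPO.w, Category.assoc, E.comp_zero hs', comp_zero])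
  have hw : i ≫ d = g ≫ (0 : X' ⟶ Z) := by rw [E.comp_zero hs, comp_zero]
  set q : Y' ⟶ Z := hPO.desc d 0 hw with hqdef
  have hq1 : g' ≫ q = d := hPO.inl_desc _ _ _
  have hq2 : i' ≫ q = 0 := hPO.inr_desc _ _ _
  obtain ⟨v, hv, -⟩ := E.is_cokernel hs' q hq2
  have hqu : q ≫ u = d' := by
    apply hPO.hom_ext
    · rw [← Category.assoc, hq1, hu]
    · rw [← Category.assoc, hq2, zero_comp, E.comp_zero hs']
  refine ⟨u, v, ?_, ?_⟩
  · apply ses_epi_cancel E hs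
    rw [← Category.assoc, hu, Category.assoc, hv, hq1, Category.comp_id]
  · apply ses_epi_cancel E hs'
    rw [← Category.assoc, hv, hqu, Category.comp_id]

/-- If the inflation of a short exact sequence admits a retraction, then the deflation
admits a section. -/
lemma ses_section (E : ExactStructure C) {X Y Z : C} {i : X ⟶ Y} {d : Y ⟶ Z}
    (hs : E.ses i d) {r : Y ⟶ X} (hr : i ≫ r = 𝟙 X) : ∃ s : Z ⟶ Y, s ≫ d = 𝟙 Z := by
  obtain ⟨s, hsfac, -⟩ := E.is_cokernel hs (𝟙 Y - r ≫ i)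
    (by rw [Preadditive.comp_sub, Category.comp_id, ← Category.assoc, hr, Category.id_comp, sub_self])
  refine ⟨s, ses_epi_cancel E hs ?_⟩
  rw [← Category.assoc, hsfac, Preadditive.sub_comp, Category.id_comp, Category.assoc,
    E.comp_zero hs, comp_zero, sub_zero, Category.comp_id]

/-- An object is in the left class of a cotorsion pair as soon as `Ext¹` vanishes against
every object of the right class. -/
lemma mem_of_ext1Zero (E : ExactStructure C) {U V : Set C} (hP : IsCotorsionPair E U V)
    {X : C} (h : ∀ V₀ ∈ V, E.Ext1Zero X V₀) : X ∈ U := by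
  obtain ⟨VX, UX, i, d, hV, hU, hs⟩ := hP.approx_left X
  obtain ⟨r, hr⟩ := h VX hV i d hs
  obtain ⟨s, hsd⟩ := ses_section E hs hr
  exact hP.summands_left s d hsd hU

/-- If `X ↣ Y ↠ Z` is a short exact sequence with `X, Z` in the left class of a cotorsion
pair, then `Ext¹(Y, V₀) = 0` for every `V₀` in the right class. -/
lemma ext1zero_mid (E : ExactStructure C) {U V : Set C} (hP : IsCotorsionPair E U V)
    {X Y Z : C} {i : X ⟶ Y} {d : Y ⟶ Z} (hs : E.ses i d) (hX : X ∈ U) (hZ : Z ∈ U)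
    {V₀ : C} (hV₀ : V₀ ∈ V) : E.Ext1Zero Y V₀ := by
  intro N j p hjp
  -- pull the sequence `V₀ ↣ N ↠ Y` back along `i : X ⟶ Y`
  obtain ⟨N₁, p₁, g₁, ⟨K₁, k₁, hk⟩, hPB⟩ := E.pullback_defl hjp i
  -- compare the kernel `K₁` with `V₀`
  obtain ⟨φ, hφ, -⟩ := E.is_kernel hjp (k₁ ≫ g₁)
    (by rw [Category.assoc, ← hPB.w, ← Category.assoc, E.comp_zero hk, zero_comp])
  have hψw : (0 : V₀ ⟶ X) ≫ i = j ≫ p := by rw [zero_comp, E.comp_zero hjp]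
  set ψ : V₀ ⟶ N₁ := hPB.lift 0 j hψw with hψdef
  have hψ1 : ψ ≫ p₁ = 0 := hPB.lift_fst _ _ _
  have hψ2 : ψ ≫ g₁ = j := hPB.lift_snd _ _ _
  obtain ⟨φ', hφ', -⟩ := E.is_kernel hk ψ hψ1
  have hφ'φ : φ' ≫ φ = 𝟙 V₀ := ses_mono_cancel E hjp
    (by rw [Category.assoc, hφ, ← Category.assoc, hφ', hψ2, Category.id_comp])
  have hφψ : φ ≫ ψ = k₁ := by
    apply hPB.hom_ext
    · rw [Category.assoc, hψ1, comp_zero, E.comp_zero hk]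
    · rw [Category.assoc, hψ2, hφ]
  have hφφ' : φ ≫ φ' = 𝟙 K₁ := ses_mono_cancel E hk
    (by rw [Category.assoc, hφ', hφψ, Category.id_comp])
  -- split `K₁ ↣ N₁ ↠ X` by pushing out along `φ` and using `Ext¹(X₂, V₀) = 0`
  obtain ⟨N₂, k₂, g₂, ⟨X₂, p₂, hk₂⟩, hPO⟩ := E.pushout_infl hk φ
  obtain ⟨u, v, huv, hvu⟩ := pushout_coker_iso E hk hPO hk₂
  have hX₂ : X₂ ∈ U := hP.summands_left v u hvu hX
  obtain ⟨r₂, hr₂⟩ := hP.ext1 hX₂ hV₀ k₂ p₂ hk₂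
  have hr₁ : k₁ ≫ (g₂ ≫ r₂ ≫ φ') = 𝟙 K₁ := by
    calc k₁ ≫ (g₂ ≫ r₂ ≫ φ') = ((k₁ ≫ g₂) ≫ r₂) ≫ φ' := by simp only [Category.assoc]
      _ = ((φ ≫ k₂) ≫ r₂) ≫ φ' := by rw [hPO.w]
      _ = φ ≫ φ' := by rw [Category.assoc φ k₂ r₂, hr₂, Category.comp_id]
      _ = 𝟙 K₁ := hφφ'
  -- the kernel `M` of the composed deflation `p ≫ d`
  obtain ⟨M, m, hm⟩ := E.defl_comp p d ⟨V₀, j, hjp⟩ ⟨X, i, hs⟩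
  obtain ⟨π, hπ, -⟩ := E.is_kernel hs (m ≫ p)
    (by rw [Category.assoc, E.comp_zero hm])
  obtain ⟨jhat, hjhat, -⟩ := E.is_kernel hm j
    (by rw [← Category.assoc, E.comp_zero hjp, zero_comp])
  set cmp : M ⟶ N₁ := hPB.lift π m hπ with hcmpdef
  have hc1 : cmp ≫ p₁ = π := hPB.lift_fst _ _ _
  have hc2 : cmp ≫ g₁ = m := hPB.lift_snd _ _ _
  have hjhatπ : jhat ≫ π = 0 := ses_mono_cancel E hs
    (by rw [Category.assoc, hπ, ← Category.assoc, hjhat, E.comp_zero hjp, zero_comp])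
  have hjhatcmp : jhat ≫ cmp = ψ := by
    apply hPB.hom_ext
    · rw [Category.assoc, hc1, hjhatπ, hψ1]
    · rw [Category.assoc, hc2, hjhat, hψ2]
  set ρ : M ⟶ V₀ := cmp ≫ (g₂ ≫ r₂ ≫ φ') ≫ φ with hρdef
  have hjhatρ : jhat ≫ ρ = 𝟙 V₀ := by
    calc jhat ≫ ρ = (φ' ≫ k₁) ≫ ((g₂ ≫ r₂ ≫ φ') ≫ φ) := by
          rw [hρdef, ← Category.assoc, hjhatcmp, hφ']
      _ = φ' ≫ (k₁ ≫ (g₂ ≫ r₂ ≫ φ')) ≫ φ := by simp only [Category.assoc]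
      _ = φ' ≫ φ := by rw [hr₁, Category.id_comp]
      _ = 𝟙 V₀ := hφ'φ
  -- push `M ↣ N ↠ Z` out along `ρ` to get `V₀ ↣ Q ↠ Z₄` with `Z₄ ≅ Z`
  obtain ⟨Q, jQ, gQ, ⟨Z₄, dQ, hq⟩, hPO₂⟩ := E.pushout_infl hm ρ
  obtain ⟨u₂, v₂, hu₂v₂, hv₂u₂⟩ := pushout_coker_iso E hm hPO₂ hq
  have hZ₄ : Z₄ ∈ U := hP.summands_left v₂ u₂ hv₂u₂ hZ
  obtain ⟨t, ht⟩ := hP.ext1 hZ₄ hV₀ jQ dQ hq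
  refine ⟨gQ ≫ t, ?_⟩
  calc j ≫ gQ ≫ t = ((jhat ≫ m) ≫ gQ) ≫ t := by rw [hjhat]; simp only [Category.assoc]
    _ = ((jhat ≫ ρ) ≫ jQ) ≫ t := by rw [Category.assoc jhat m gQ, hPO₂.w, ← Category.assoc]
    _ = 𝟙 V₀ := by rw [hjhatρ, Category.id_comp, ht]

/-- if `A ↣ B ↠ U` is a short exact sequence with `U ∈ U` and `A ∈ B⁻`,
then `B ∈ B⁻`. -/
theorem bminus_closed_under_u_extension
    (E : ExactStructure C) (hP : E.EnoughProj) (hI : E.EnoughInj)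
    {S T U V : Set C} (hST : IsCotorsionPair E S T) (hUV : IsCotorsionPair E U V)
    (hSU : S ⊆ U)
    {A B U0 : C} {f : A ⟶ B} {g : B ⟶ U0}
    (hses : E.ses f g) (hU0 : U0 ∈ U)
    (hA : A ∈ BMinus E (T ∩ U) S) :
    B ∈ BMinus E (T ∩ U) S := by
  obtain ⟨W', S', iA, dA, hW', hS', hsA⟩ := hA
  -- pushout of `A ↣ W' ↠ S'` along `f : A ⟶ B`, giving `B ↣ P ↠ Z₂` with `Z₂ ≅ S'`
  obtain ⟨P, iB, gP, ⟨Z₂, d₂, hs₂⟩, hPO1⟩ := E.pushout_infl hsA f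
  have hZ₂ : Z₂ ∈ S := by
    obtain ⟨u, v, huv, hvu⟩ := pushout_coker_iso E hsA hPO1 hs₂
    exact hST.summands_left v u hvu hS'
  -- pushout of `A ↣ B ↠ U0` along `iA : A ⟶ W'`, giving `W' ↣ P₁ ↠ Z₃` with `Z₃ ≅ U0`
  obtain ⟨P₁, iW, gB, ⟨Z₃, d₃, hs₃⟩, hPO2⟩ := E.pushout_infl hses iA
  have hZ₃ : Z₃ ∈ U := by
    obtain ⟨u, v, huv, hvu⟩ := pushout_coker_iso E hses hPO2 hs₃
    exact hUV.summands_left v u hvu hU0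
  have hP₁ : P₁ ∈ U := mem_of_ext1Zero E hUV
    (fun V₀ hV₀ => ext1zero_mid E hUV hs₃ hW'.2 hZ₃ hV₀)
  -- `P ≅ P₁` since both are pushouts of the same span, hence `P ∈ U`
  have hPmem : P ∈ U := by
    set α : P ⟶ P₁ := hPO1.desc iW gB hPO2.w.symm with hαdef
    set β : P₁ ⟶ P := hPO2.desc iB gP hPO1.w.symm with hβdef
    have hα1 : gP ≫ α = iW := hPO1.inl_desc _ _ _
    have hα2 : iB ≫ α = gB := hPO1.inr_desc _ _ _
    have hβ1 : gB ≫ β = iB := hPO2.inl_desc _ _ _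
    have hβ2 : iW ≫ β = gP := hPO2.inr_desc _ _ _
    have hαβ : α ≫ β = 𝟙 P := by
      apply hPO1.hom_ext
      · rw [← Category.assoc, hα1, hβ2, Category.comp_id]
      · rw [← Category.assoc, hα2, hβ1, Category.comp_id]
    exact hUV.summands_left α β hαβ hP₁
  -- take an `(S, T)`-approximation `P ↣ T' ↠ S₄`
  obtain ⟨T', S₄, i₄, d₄, hT', hS₄, hs₄⟩ := hST.approx_right P
  have hT'U : T' ∈ U := mem_of_ext1Zero E hUV
    (fun V₀ hV₀ => ext1zero_mid E hUV hs₄ hPmem (hSU hS₄) hV₀)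
  -- the composite inflation `B ↣ P ↣ T'`
  obtain ⟨Sfin, dfin, hsfin⟩ := E.infl_comp iB i₄ ⟨Z₂, d₂, hs₂⟩ ⟨S₄, d₄, hs₄⟩
  -- pushout of `P ↣ T' ↠ S₄` along the deflation `d₂ : P ⟶ Z₂`
  obtain ⟨Q₅, a₅, g₅, ⟨S₅, d₅, hs₅⟩, hPO5⟩ := E.pushout_infl hs₄ d₂
  have hS₅ : S₅ ∈ S := by
    obtain ⟨u, v, huv, hvu⟩ := pushout_coker_iso E hs₄ hPO5 hs₅
    exact hST.summands_left v u hvu hS₄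
  have hQ₅ : Q₅ ∈ S := mem_of_ext1Zero E hST
    (fun T₀ hT₀ => ext1zero_mid E hST hs₅ hZ₂ hS₅ hT₀)
  -- `Sfin ≅ Q₅`, hence `Sfin ∈ S`
  have hSfin : Sfin ∈ S := by
    obtain ⟨a, ha, -⟩ := E.is_cokernel hs₂ (i₄ ≫ dfin)
      (by rw [← Category.assoc, E.comp_zero hsfin])
    obtain ⟨u, hu, -⟩ := E.is_cokernel hsfin g₅
      (by rw [Category.assoc, hPO5.w, ← Category.assoc, E.comp_zero hs₂, zero_comp])
    have hwv : i₄ ≫ dfin = d₂ ≫ a := ha.symm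
    set v : Q₅ ⟶ Sfin := hPO5.desc dfin a hwv with hvdef
    have hv1 : g₅ ≫ v = dfin := hPO5.inl_desc _ _ _
    have hv2 : a₅ ≫ v = a := hPO5.inr_desc _ _ _
    have huv : u ≫ v = 𝟙 Sfin := by
      apply ses_epi_cancel E hsfin
      rw [← Category.assoc, hu, hv1, Category.comp_id]
    have hau : a ≫ u = a₅ := by
      apply ses_epi_cancel E hs₂
      rw [← Category.assoc, ha, Category.assoc, hu, hPO5.w]
    have hvu : v ≫ u = 𝟙 Q₅ := by
      apply hPO5.hom_ext
      · rw [← Category.assoc, hv1, hu, Category.comp_id]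
      · rw [← Category.assoc, hv2, hau, Category.comp_id]
    exact hST.summands_left u v huv hQ₅
  exact ⟨T', Sfin, iB ≫ i₄, dfin, ⟨hT', hT'U⟩, hSfin, hsfin⟩
end

section
/- Let (S,T),(U,V) be a twin cotorsion pair on B. If A ↣ B ↠ S is a short exact sequence with S ∈ S and B ∈ B⁻, then A ∈ B⁻. -/
open CategoryTheory Limits

universe v u

variable {C : Type u} [Category.{v} C] [Preadditive C] [HasBinaryBiproducts C]

section AuxLemmas

/-- An inflation is left-cancellable (monic). -/
lemma ExactStructure.infl_cancel (E : ExactStructure C) {X Y Z : C} {i : X ⟶ Y} {d : Y ⟶ Z}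
    (h : E.ses i d) {W : C} {x y : W ⟶ X} (hxy : x ≫ i = y ≫ i) : x = y := by
  obtain ⟨h0, hh0, huniq⟩ := E.is_kernel h (x ≫ i)
    (by rw [Category.assoc, E.comp_zero h, Limits.comp_zero])
  exact (huniq x rfl).trans (huniq y hxy.symm).symm

/-- A deflation is right-cancellable (epic). -/
lemma ExactStructure.defl_cancel (E : ExactStructure C) {X Y Z : C} {i : X ⟶ Y} {d : Y ⟶ Z}
    (h : E.ses i d) {W : C} {x y : Z ⟶ W} (hxy : d ≫ x = d ≫ y) : x = y := by
  obtain ⟨h0, hh0, huniq⟩ := E.is_cokernel h (d ≫ x)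
    (by rw [← Category.assoc, E.comp_zero h, Limits.zero_comp])
  exact (huniq x rfl).trans (huniq y hxy.symm).symm

/-- The cokernel of a pushout of an inflation is (canonically) the cokernel of the original
inflation: we produce mutually inverse comparison maps. -/
lemma ExactStructure.coker_pushout (E : ExactStructure C) {X Y Z X' Y' Z' : C}
    {i : X ⟶ Y} {d : Y ⟶ Z} (hid : E.ses i d) {g : X ⟶ X'} {g' : Y ⟶ Y'} {i' : X' ⟶ Y'}
    (hpo : IsPushout i g g' i') {d' : Y' ⟶ Z'} (hd' : E.ses i' d') :
    ∃ (v : Z ⟶ Z') (w : Z' ⟶ Z), d ≫ v = g' ≫ d' ∧ v ≫ w = 𝟙 Z ∧ w ≫ v = 𝟙 Z' := by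
  have hcomm : i ≫ d = g ≫ (0 : X' ⟶ Z) := by rw [E.comp_zero hid, Limits.comp_zero]
  set u : Y' ⟶ Z := hpo.desc d 0 hcomm with hu
  have hu1 : g' ≫ u = d := hpo.inl_desc _ _ _
  have hu2 : i' ≫ u = 0 := hpo.inr_desc _ _ _
  obtain ⟨w, hw, -⟩ := E.is_cokernel hd' u hu2
  obtain ⟨v, hv, -⟩ := E.is_cokernel hid (g' ≫ d')
    (by rw [← Category.assoc, hpo.w, Category.assoc, E.comp_zero hd', Limits.comp_zero])
  have huv : u ≫ v = d' := by
    apply hpo.hom_ext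
    · rw [← Category.assoc, hu1, hv]
    · rw [← Category.assoc, hu2, Limits.zero_comp, E.comp_zero hd']
  refine ⟨v, w, hv, ?_, ?_⟩
  · apply E.defl_cancel hid
    rw [← Category.assoc, hv, Category.assoc, hw, hu1, Category.comp_id]
  · apply E.defl_cancel hd'
    rw [← Category.assoc, hw, huv, Category.comp_id]

/-- Extension closure of Ext-vanishing: if `X₁ ↣ P ↠ X₂` is a short exact sequence with
`X₁, X₂ ∈ S`, and `T₀ ∈ T` for a cotorsion pair `(S, T)`, then `Ext¹(P, T₀) = 0`. -/
lemma ext1zero_of_extension (E : ExactStructure C) {S T : Set C}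
    (hST : IsCotorsionPair E S T) {X₁ P X₂ : C} {a : X₁ ⟶ P} {b : P ⟶ X₂}
    (hab : E.ses a b) (hX₁ : X₁ ∈ S) (hX₂ : X₂ ∈ S) {T₀ : C} (hT : T₀ ∈ T) :
    E.Ext1Zero P T₀ := by
  intro M k m hkm
  -- pull back `m` along `a`
  obtain ⟨M₁, m₁, p₁, ⟨T₁, k₁, hk₁⟩, hPB⟩ := E.pullback_defl hkm a
  -- comparison isos between the kernels `T₁` and `T₀`
  obtain ⟨φ, hφ, -⟩ := E.is_kernel hkm (k₁ ≫ p₁)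
    (by rw [Category.assoc, ← hPB.w, ← Category.assoc, E.comp_zero hk₁, zero_comp])
  set ψ₀ : T₀ ⟶ M₁ := hPB.lift 0 k (by rw [zero_comp, E.comp_zero hkm]) with hψ₀
  have hψ₀₁ : ψ₀ ≫ m₁ = 0 := hPB.lift_fst _ _ _
  have hψ₀₂ : ψ₀ ≫ p₁ = k := hPB.lift_snd _ _ _
  obtain ⟨ψ, hψ, -⟩ := E.is_kernel hk₁ ψ₀ hψ₀₁
  have hψφ : ψ ≫ φ = 𝟙 T₀ := by
    apply E.infl_cancel hkm
    rw [Category.assoc, hφ, ← Category.assoc, hψ, hψ₀₂, Category.id_comp]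
  have hφψ₀ : φ ≫ ψ₀ = k₁ := by
    apply hPB.hom_ext
    · rw [Category.assoc, hψ₀₁, comp_zero, E.comp_zero hk₁]
    · rw [Category.assoc, hψ₀₂, hφ]
  have hφψ : φ ≫ ψ = 𝟙 T₁ := by
    apply E.infl_cancel hk₁
    rw [Category.assoc, hψ, hφψ₀, Category.id_comp]
  have hT₁ : T₁ ∈ T := hST.summands_right φ ψ hφψ hT
  -- split the pulled-back sequence (using `Ext¹(X₁, T₁) = 0`)
  obtain ⟨ρ, hρ⟩ := hST.ext1 hX₁ hT₁ k₁ m₁ hk₁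
  -- the kernel `K` of the composite deflation `m ≫ b`
  obtain ⟨K, k', hk'⟩ := E.defl_comp m b ⟨T₀, k, hkm⟩ ⟨X₁, a, hab⟩
  obtain ⟨κ, hκ, -⟩ := E.is_kernel hk' k
    (by rw [← Category.assoc, E.comp_zero hkm, zero_comp])
  obtain ⟨l, hl, -⟩ := E.is_kernel hab (k' ≫ m)
    (by rw [Category.assoc, E.comp_zero hk'])
  set ι' : K ⟶ M₁ := hPB.lift l k' hl with hι'
  have hι₁ : ι' ≫ m₁ = l := hPB.lift_fst _ _ _
  have hι₂ : ι' ≫ p₁ = k' := hPB.lift_snd _ _ _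
  set ρ' : K ⟶ T₀ := ι' ≫ ρ ≫ φ with hρ'
  -- push out `K ↣ M ↠ X₂` along the retraction `ρ' : K ⟶ T₀`
  obtain ⟨N, k'', μ, ⟨Z₄, n, hn⟩, hPO2⟩ := E.pushout_infl hk' ρ'
  obtain ⟨v, w, -, hvw, hwv⟩ := E.coker_pushout hk' hPO2 hn
  have hZ₄ : Z₄ ∈ S := hST.summands_left w v hwv hX₂
  obtain ⟨r'', hr''⟩ := hST.ext1 hZ₄ hT k'' n hn
  -- assemble the retraction of `k`
  refine ⟨μ ≫ r'', ?_⟩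
  have hκι : κ ≫ ι' = ψ₀ := by
    apply hPB.hom_ext
    · rw [Category.assoc, hι₁, hψ₀₁]
      apply E.infl_cancel hab
      rw [Category.assoc, hl, ← Category.assoc, hκ, E.comp_zero hkm, zero_comp]
    · rw [Category.assoc, hι₂, hκ, hψ₀₂]
  have hκρ' : κ ≫ ρ' = 𝟙 T₀ := by
    rw [hρ', ← Category.assoc, hκι, ← hψ]
    rw [Category.assoc, ← Category.assoc k₁, hρ, Category.id_comp, hψφ]
  have hkμ : k ≫ μ = κ ≫ ρ' ≫ k'' := by
    rw [← hκ, Category.assoc, hPO2.w]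
  rw [← Category.assoc, hkμ]
  simp only [Category.assoc]
  rw [hr'', Category.comp_id]
  exact hκρ'

/-- If `X₁ ↣ P ↠ X₂` is short exact with `X₁, X₂ ∈ S`, then `P ∈ S`
(extension closure of the left class of a cotorsion pair). -/
lemma mem_left_of_extension (E : ExactStructure C) {S T : Set C}
    (hST : IsCotorsionPair E S T) {X₁ P X₂ : C} {a : X₁ ⟶ P} {b : P ⟶ X₂}
    (hab : E.ses a b) (hX₁ : X₁ ∈ S) (hX₂ : X₂ ∈ S) : P ∈ S := by
  obtain ⟨TP, SP, iP, dP, hTP, hSP, hsesP⟩ := hST.approx_left P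
  obtain ⟨r, hr⟩ := ext1zero_of_extension E hST hab hX₁ hX₂ hTP iP dP hsesP
  obtain ⟨s, hs, -⟩ := E.is_cokernel hsesP (𝟙 SP - r ≫ iP)
    (by rw [Preadditive.comp_sub, Category.comp_id, ← Category.assoc, hr, Category.id_comp,
      sub_self])
  have hsd : s ≫ dP = 𝟙 P := by
    apply E.defl_cancel hsesP
    rw [← Category.assoc, hs, Preadditive.sub_comp, Category.id_comp, Category.assoc,
      E.comp_zero hsesP, comp_zero, sub_zero, Category.comp_id]
  exact hST.summands_left s dP hsd hSP

end AuxLemmas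

/-- if `A ↣ B ↠ S` is a short exact sequence with `S ∈ S` and `B ∈ B⁻`,
then `A ∈ B⁻`. -/
theorem bminus_closed_under_s_subobject
    (E : ExactStructure C) (hP : E.EnoughProj) (hI : E.EnoughInj)
    {S T U V : Set C} (hST : IsCotorsionPair E S T) (hUV : IsCotorsionPair E U V)
    (hSU : S ⊆ U)
    {A B S0 : C} {f : A ⟶ B} {g : B ⟶ S0}
    (hses : E.ses f g) (hS0 : S0 ∈ S)
    (hB : B ∈ BMinus E (T ∩ U) S) :
    A ∈ BMinus E (T ∩ U) S := by
  obtain ⟨W₀, S₁, i₀, d₀, hW₀, hS₁, h₁⟩ := hB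
  -- the composite inflation `A ↣ B ↣ W₀`, with cokernel `C₀`
  obtain ⟨C₀, q, hq⟩ := E.infl_comp f i₀ ⟨S0, g, hses⟩ ⟨S₁, d₀, h₁⟩
  -- the pushout `P` of `B ↣ W₀` along `B ↠ S0`, with `S0 ↣ P ↠ Z₂`
  obtain ⟨P, j', g', ⟨Z₂, p'', hp''⟩, hPO⟩ := E.pushout_infl h₁ g
  obtain ⟨v, w, -, hvw, hwv⟩ := E.coker_pushout h₁ hPO hp''
  have hZ₂ : Z₂ ∈ S := hST.summands_left w v hwv hS₁
  -- `P` is an extension of `Z₂` by `S0`, both in `S`, so `P ∈ S`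
  have hPmem : P ∈ S := mem_left_of_extension E hST hp'' hS0 hZ₂
  -- compare `C₀` with `P`
  obtain ⟨j, hj, -⟩ := E.is_cokernel hses (i₀ ≫ q)
    (by rw [← Category.assoc, E.comp_zero hq])
  obtain ⟨e, he, -⟩ := E.is_cokernel hq g'
    (by rw [Category.assoc, hPO.w, ← Category.assoc, E.comp_zero hses, zero_comp])
  set e' : P ⟶ C₀ := hPO.desc q j hj.symm with he'
  have he'1 : g' ≫ e' = q := hPO.inl_desc _ _ _
  have hee' : e ≫ e' = 𝟙 C₀ := by
    apply E.defl_cancel hq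
    rw [← Category.assoc, he, he'1, Category.comp_id]
  have hC₀ : C₀ ∈ S := hST.summands_left e e' hee' hPmem
  exact ⟨W₀, C₀, f ≫ i₀, q, hW₀, hC₀, hq⟩
end

section
/- Let (S,T),(U,V) be a twin cotorsion pair on B and B ∈ B. Construct b⁺ : B → B⁺ via the push-out of the approximation sequences V_B ↣ U_B ↠ B and U_B ↣ T^U ↠ S^U. Then for any Y ∈ B⁺, the map Hom(B⁺, Y) → Hom(B, Y) induced by b⁺ is surjective, and the induced map on the quotient category B/W is bijective. -/
open CategoryTheory Limits

universe v u

variable {C : Type u} [Category.{v} C] [Preadditive C] [HasBinaryBiproducts C]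

section Aux

variable (E : ExactStructure C)

/-- The kernel of a pullback of a deflation is isomorphic to the original kernel. -/
lemma ExactStructure.pullback_ses {N M P : C} {i : N ⟶ M} {d : M ⟶ P} (h : E.ses i d)
    {A : C} (f : A ⟶ P) :
    ∃ (M' : C) (d' : M' ⟶ A) (g : M' ⟶ M) (N' : C) (j : N' ⟶ M') (s : N ⟶ N') (r : N' ⟶ N),
      E.ses j d' ∧ IsPullback d' g f d ∧ s ≫ r = 𝟙 N ∧ r ≫ s = 𝟙 N' := by
  obtain ⟨M', d', g, ⟨N', j, hj⟩, hpb⟩ := E.pullback_defl h f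
  have hif : (0 : N ⟶ A) ≫ f = i ≫ d := by rw [E.comp_zero h, Limits.zero_comp]
  set jN : N ⟶ M' := hpb.lift 0 i hif with hjN
  have hjN1 : jN ≫ d' = 0 := hpb.lift_fst 0 i hif
  have hjN2 : jN ≫ g = i := hpb.lift_snd 0 i hif
  obtain ⟨s, hs, -⟩ := E.is_kernel hj jN hjN1
  have hjg : (j ≫ g) ≫ d = 0 := by
    rw [Category.assoc, ← hpb.w, ← Category.assoc, E.comp_zero hj, Limits.zero_comp]
  obtain ⟨r, hr, -⟩ := E.is_kernel h (j ≫ g) hjg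
  refine ⟨M', d', g, N', j, s, r, hj, hpb, ?_, ?_⟩
  · obtain ⟨w, -, huniq⟩ := E.is_kernel h i (E.comp_zero h)
    have h1 : (s ≫ r) ≫ i = i := by rw [Category.assoc, hr, ← Category.assoc, hs, hjN2]
    rw [huniq (s ≫ r) h1, huniq (𝟙 N) (by simp)]
  · have hrjN : r ≫ jN = j := by
      apply hpb.hom_ext
      · rw [Category.assoc, hjN1, Limits.comp_zero, E.comp_zero hj]
      · rw [Category.assoc, hjN2, hr]
    obtain ⟨w, -, huniq⟩ := E.is_kernel hj j (E.comp_zero hj)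
    have h1 : (r ≫ s) ≫ j = j := by rw [Category.assoc, hs, hrjN]
    rw [huniq (r ≫ s) h1, huniq (𝟙 N') (by simp)]

/-- The cokernel of a pushout of an inflation is isomorphic to the original cokernel. -/
lemma ExactStructure.pushout_ses {N M P : C} {i : N ⟶ M} {d : M ⟶ P} (h : E.ses i d)
    {A : C} (f : N ⟶ A) :
    ∃ (M' : C) (j : A ⟶ M') (g : M ⟶ M') (P' : C) (d' : M' ⟶ P') (s : P ⟶ P') (r : P' ⟶ P),
      E.ses j d' ∧ IsPushout i f g j ∧ s ≫ r = 𝟙 P ∧ r ≫ s = 𝟙 P' := by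
  obtain ⟨M', j, g, ⟨P', d', hd'⟩, hpo⟩ := E.pushout_infl h f
  have hif : i ≫ d = f ≫ (0 : A ⟶ P) := by rw [E.comp_zero h, Limits.comp_zero]
  set φ : M' ⟶ P := hpo.desc d 0 hif with hφ
  have hφ1 : g ≫ φ = d := hpo.inl_desc d 0 hif
  have hφ2 : j ≫ φ = 0 := hpo.inr_desc d 0 hif
  obtain ⟨r, hr, -⟩ := E.is_cokernel hd' φ hφ2
  have hgd : i ≫ (g ≫ d') = 0 := by
    rw [← Category.assoc, hpo.w, Category.assoc, E.comp_zero hd', Limits.comp_zero]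
  obtain ⟨s, hs, -⟩ := E.is_cokernel h (g ≫ d') hgd
  refine ⟨M', j, g, P', d', s, r, hd', hpo, ?_, ?_⟩
  · obtain ⟨w, -, huniq⟩ := E.is_cokernel h d (E.comp_zero h)
    have h1 : d ≫ (s ≫ r) = d := by rw [← Category.assoc, hs, Category.assoc, hr, hφ1]
    rw [huniq (s ≫ r) h1, huniq (𝟙 P) (by simp)]
  · have hφs : φ ≫ s = d' := by
      apply hpo.hom_ext
      · rw [← Category.assoc, hφ1, hs]
      · rw [← Category.assoc, hφ2, Limits.zero_comp, E.comp_zero hd']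
    obtain ⟨w, -, huniq⟩ := E.is_cokernel hd' d' (E.comp_zero hd')
    have h1 : d' ≫ (r ≫ s) = d' := by rw [← Category.assoc, hr, hφs]
    rw [huniq (r ≫ s) h1, huniq (𝟙 P') (by simp)]

lemma ExactStructure.section_of_retraction {N M P : C} {i : N ⟶ M} {d : M ⟶ P}
    (h : E.ses i d) (r : M ⟶ N) (hr : i ≫ r = 𝟙 N) : ∃ s : P ⟶ M, s ≫ d = 𝟙 P := by
  have h0 : i ≫ (𝟙 M - r ≫ i) = 0 := by
    rw [Preadditive.comp_sub, Category.comp_id, ← Category.assoc, hr, Category.id_comp,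
      sub_self]
  obtain ⟨σ, hσ, -⟩ := E.is_cokernel h _ h0
  refine ⟨σ, ?_⟩
  obtain ⟨w, -, huniq⟩ := E.is_cokernel h d (E.comp_zero h)
  have h1 : d ≫ (σ ≫ d) = d := by
    rw [← Category.assoc, hσ, Preadditive.sub_comp, Category.id_comp, Category.assoc,
      E.comp_zero h, Limits.comp_zero, sub_zero]
  rw [huniq (σ ≫ d) h1, huniq (𝟙 P) (by simp)]

lemma ExactStructure.retraction_of_section {N M P : C} {i : N ⟶ M} {d : M ⟶ P}
    (h : E.ses i d) (s : P ⟶ M) (hs : s ≫ d = 𝟙 P) : ∃ r : M ⟶ N, i ≫ r = 𝟙 N := by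
  have h0 : (𝟙 M - d ≫ s) ≫ d = 0 := by
    rw [Preadditive.sub_comp, Category.id_comp, Category.assoc, hs, Category.comp_id,
      sub_self]
  obtain ⟨r, hr, -⟩ := E.is_kernel h _ h0
  refine ⟨r, ?_⟩
  obtain ⟨w, -, huniq⟩ := E.is_kernel h i (E.comp_zero h)
  have h1 : (i ≫ r) ≫ i = i := by
    rw [Category.assoc, hr, Preadditive.comp_sub, Category.comp_id, ← Category.assoc,
      E.comp_zero h, Limits.zero_comp, sub_zero]
  rw [huniq (i ≫ r) h1, huniq (𝟙 N) (by simp)]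

/-- Lifting along a deflation whose kernel lies in a summand-closed class `V`
with `Ext¹(A, V) = 0`. -/
lemma ExactStructure.lift_deflation {N M P A : C} {i : N ⟶ M} {d : M ⟶ P} (h : E.ses i d)
    (g : A ⟶ P) {V : Set C} (hV : ClosedUnderSummands V) (hN : N ∈ V)
    (hext : ∀ N' ∈ V, E.Ext1Zero A N') : ∃ l : A ⟶ M, l ≫ d = g := by
  obtain ⟨M', d', g', N', j, s, r, hj, hpb, hsr, hrs⟩ := E.pullback_ses h g
  have hN' : N' ∈ V := hV r s hrs hN
  obtain ⟨ρ, hρ⟩ := hext N' hN' j d' hj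
  obtain ⟨σ, hσ⟩ := E.section_of_retraction hj ρ hρ
  refine ⟨σ ≫ g', ?_⟩
  rw [Category.assoc, ← hpb.w, ← Category.assoc, hσ, Category.id_comp]

/-- Extending along an inflation whose cokernel lies in a summand-closed class `S`
with `Ext¹(S, A) = 0`. -/
lemma ExactStructure.extend_inflation {N M P A : C} {i : N ⟶ M} {d : M ⟶ P} (h : E.ses i d)
    (g : N ⟶ A) {S : Set C} (hS : ClosedUnderSummands S) (hP : P ∈ S)
    (hext : ∀ P' ∈ S, E.Ext1Zero P' A) : ∃ e : M ⟶ A, i ≫ e = g := by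
  obtain ⟨M', j, g', P', d', s, r, hj, hpo, hsr, hrs⟩ := E.pushout_ses h g
  have hP' : P' ∈ S := hS r s hrs hP
  obtain ⟨ρ, hρ⟩ := hext P' hP' j d' hj
  refine ⟨g' ≫ ρ, ?_⟩
  rw [← Category.assoc, hpo.w, Category.assoc, hρ, Category.comp_id]

lemma ext1zero_biprod_left {X Y : C} {V : Set C} (hV : ClosedUnderSummands V)
    (hX : ∀ N ∈ V, E.Ext1Zero X N) (hY : ∀ N ∈ V, E.Ext1Zero Y N)
    {N : C} (hN : N ∈ V) : E.Ext1Zero (X ⊞ Y) N := by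
  intro M i d hs
  obtain ⟨sX, hsX⟩ := E.lift_deflation hs (biprod.inl : X ⟶ X ⊞ Y) hV hN hX
  obtain ⟨sY, hsY⟩ := E.lift_deflation hs (biprod.inr : Y ⟶ X ⊞ Y) hV hN hY
  have hsd : (biprod.desc sX sY) ≫ d = 𝟙 (X ⊞ Y) := by
    apply biprod.hom_ext' <;> simp [hsX, hsY]
  exact E.retraction_of_section hs _ hsd

lemma ext1zero_biprod_right {X Y : C} {S : Set C} (hS : ClosedUnderSummands S)
    (hX : ∀ A ∈ S, E.Ext1Zero A X) (hY : ∀ A ∈ S, E.Ext1Zero A Y)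
    {A : C} (hA : A ∈ S) : E.Ext1Zero A (X ⊞ Y) := by
  intro M i d hs
  obtain ⟨eX, heX⟩ := E.extend_inflation hs (biprod.fst : X ⊞ Y ⟶ X) hS hA hX
  obtain ⟨eY, heY⟩ := E.extend_inflation hs (biprod.snd : X ⊞ Y ⟶ Y) hS hA hY
  refine ⟨biprod.lift eX eY, ?_⟩
  apply biprod.hom_ext <;> simp [heX, heY]

lemma mem_right_biprod {S T : Set C} (hST : IsCotorsionPair E S T)
    {X Y : C} (hX : X ∈ T) (hY : Y ∈ T) : (X ⊞ Y) ∈ T := by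
  obtain ⟨T₀, S₀, i₀, d₀, hT₀, hS₀, hses⟩ := hST.approx_right (X ⊞ Y)
  have hext : E.Ext1Zero S₀ (X ⊞ Y) :=
    ext1zero_biprod_right E hST.summands_left (fun A hA => hST.ext1 hA hX)
      (fun A hA => hST.ext1 hA hY) hS₀
  obtain ⟨r, hr⟩ := hext i₀ d₀ hses
  exact hST.summands_right i₀ r hr hT₀

lemma mem_left_biprod {U V : Set C} (hUV : IsCotorsionPair E U V)
    {X Y : C} (hX : X ∈ U) (hY : Y ∈ U) : (X ⊞ Y) ∈ U := by
  obtain ⟨V₀, U₀, i₀, d₀, hV₀, hU₀, hses⟩ := hUV.approx_left (X ⊞ Y)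
  obtain ⟨l, hl⟩ := E.lift_deflation hses (𝟙 (X ⊞ Y)) hUV.summands_right hV₀
    (fun N hN => ext1zero_biprod_left E hUV.summands_right
      (fun N' hN' => hUV.ext1 hX hN') (fun N' hN' => hUV.ext1 hY hN') hN)
  exact hUV.summands_left l d₀ hl hU₀

end Aux

/-- for the coreflection `b⁺ : B → B⁺` and any `Y ∈ B⁺`, composition with `b⁺`
is surjective on `Hom(-,Y)` and bijective on `Hom(-,Y)` in the quotient category `B/W`. -/
theorem coreflection_hom_bijective
    (E : ExactStructure C) (hP : E.EnoughProj) (hI : E.EnoughInj)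
    {S T U V : Set C} (hST : IsCotorsionPair E S T) (hUV : IsCotorsionPair E U V)
    (hSU : S ⊆ U)
    {B VB UB TU SU Bp : C}
    (vb : VB ⟶ UB) (d : UB ⟶ B) (u : UB ⟶ TU) (sU : TU ⟶ SU)
    (t : TU ⟶ Bp) (bp : B ⟶ Bp) (sp : Bp ⟶ SU)
    (h1 : E.ses vb d) (hVB : VB ∈ V) (hUB : UB ∈ U)
    (h2 : E.ses u sU) (hTU : TU ∈ T ∩ U) (hSUmem : SU ∈ S)
    (h3 : E.ses bp sp) (hPO : IsPushout u d t bp)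
    {Y : C} (hY : Y ∈ BPlus E V (T ∩ U)) :
    (∀ y : B ⟶ Y, ∃ q : Bp ⟶ Y, bp ≫ q = y) ∧
    (∀ q q' : Bp ⟶ Y,
      FactorsThru (T ∩ U) (bp ≫ q - bp ≫ q') → FactorsThru (T ∩ U) (q - q')) := by
  obtain ⟨V', W', i', d', hV', hW', hses'⟩ := hY
  constructor
  · intro y
    obtain ⟨m, hm⟩ := E.lift_deflation hses' (d ≫ y) hUV.summands_right hV'
      (fun N hN => hUV.ext1 hUB hN)
    obtain ⟨z, hz⟩ := E.extend_inflation h2 m hST.summands_left hSUmem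
      (fun P' hP' => hST.ext1 hP' hW'.1)
    have hw : u ≫ (z ≫ d') = d ≫ y := by rw [← Category.assoc, hz, hm]
    exact ⟨hPO.desc (z ≫ d') y hw, hPO.inr_desc _ _ _⟩
  · intro q q' hfac
    obtain ⟨Z, a, b, hZ, hab⟩ := hfac
    have hab' : a ≫ b = bp ≫ (q - q') := by rw [hab, Preadditive.comp_sub]
    obtain ⟨ea, hea⟩ := E.extend_inflation h3 a hST.summands_left hSUmem
      (fun P' hP' => hST.ext1 hP' hZ.1)
    have hg0 : bp ≫ ((q - q') - ea ≫ b) = 0 := by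
      rw [Preadditive.comp_sub, ← hab', ← Category.assoc, hea, sub_self]
    obtain ⟨h, hh, -⟩ := E.is_cokernel h3 _ hg0
    obtain ⟨h', hh'⟩ := E.lift_deflation hses' h hUV.summands_right hV'
      (fun N hN => hUV.ext1 (hSU hSUmem) hN)
    refine ⟨Z ⊞ W', biprod.lift ea (sp ≫ h'), biprod.desc b d',
      ⟨mem_right_biprod E hST hZ.1 hW'.1, mem_left_biprod E hUV hZ.2 hW'.2⟩, ?_⟩
    rw [biprod.lift_desc, Category.assoc, hh', hh]
    abel
end

section
/- Let (S,T),(U,V) be a twin cotorsion pair on B and B ∈ B, with b⁺ : B → B⁺ the canonical coreflection map. Then the following are equivalent: (a) B⁺ ∈ W; (b) B ∈ U; (c) the image of b⁺ in B/W is zero. -/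
open CategoryTheory Limits

universe v u

variable {C : Type u} [Category.{v} C] [Preadditive C] [HasBinaryBiproducts C]

section Aux

variable (E : ExactStructure C)

/-- A deflation appearing in a short exact sequence is an epimorphism. -/
lemma ExactStructure.ses_epi {X Y Z : C} {i : X ⟶ Y} {d : Y ⟶ Z} (h : E.ses i d)
    {W : C} (a b : Z ⟶ W) (hab : d ≫ a = d ≫ b) : a = b := by
  obtain ⟨k, hk, huniq⟩ := E.is_cokernel h (d ≫ a)
    (by rw [← Category.assoc, E.comp_zero h, Limits.zero_comp])
  exact (huniq a rfl).trans (huniq b hab.symm).symm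

/-- An inflation appearing in a short exact sequence is a monomorphism. -/
lemma ExactStructure.ses_mono {X Y Z : C} {i : X ⟶ Y} {d : Y ⟶ Z} (h : E.ses i d)
    {W : C} (a b : W ⟶ X) (hab : a ≫ i = b ≫ i) : a = b := by
  obtain ⟨k, hk, huniq⟩ := E.is_kernel h (a ≫ i)
    (by rw [Category.assoc, E.comp_zero h, Limits.comp_zero])
  exact (huniq a rfl).trans (huniq b hab.symm).symm

/-- If the inflation of a short exact sequence has a retraction, the deflation has a section. -/
lemma ExactStructure.retr_to_sect {X Y Z : C} {i : X ⟶ Y} {d : Y ⟶ Z} (h : E.ses i d)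
    (r : Y ⟶ X) (hr : i ≫ r = 𝟙 X) : ∃ s : Z ⟶ Y, s ≫ d = 𝟙 Z := by
  obtain ⟨s, hs, -⟩ := E.is_cokernel h (𝟙 Y - r ≫ i)
    (by simp [Preadditive.comp_sub, ← Category.assoc, hr])
  refine ⟨s, E.ses_epi h _ _ ?_⟩
  rw [← Category.assoc, hs]
  simp [Preadditive.sub_comp, Category.assoc, E.comp_zero h]

/-- Lifting lemma: a map from an object of `U` lifts along a deflation whose kernel is in `V`. -/
lemma lift_lemma {U V : Set C} (hUV : IsCotorsionPair E U V)
    {K M N : C} {j : K ⟶ M} {p : M ⟶ N} (h : E.ses j p) (hK : K ∈ V)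
    {Z : C} (hZ : Z ∈ U) (g : Z ⟶ N) : ∃ l : Z ⟶ M, l ≫ p = g := by
  obtain ⟨Y', p', q, ⟨K', j', h'⟩, hpb⟩ := E.pullback_defl h g
  -- comparison map `α : K' ⟶ K`
  obtain ⟨α, hα, -⟩ := E.is_kernel h (j' ≫ q)
    (by rw [Category.assoc, ← hpb.w, ← Category.assoc, E.comp_zero h', Limits.zero_comp])
  -- comparison map `γ : K ⟶ K'`
  have hβw : (0 : K ⟶ Z) ≫ g = j ≫ p := by rw [Limits.zero_comp, E.comp_zero h]
  set β : K ⟶ Y' := hpb.lift 0 j hβw with hβ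
  obtain ⟨γ, hγ, -⟩ := E.is_kernel h' β (by rw [hβ, hpb.lift_fst])
  have hαγ : α ≫ γ = 𝟙 K' := by
    refine E.ses_mono h' _ _ ?_
    rw [Category.assoc, hγ, Category.id_comp]
    refine hpb.hom_ext ?_ ?_
    · rw [Category.assoc, hβ, hpb.lift_fst, Limits.comp_zero, E.comp_zero h']
    · rw [Category.assoc, hβ, hpb.lift_snd, hα]
  have hK' : K' ∈ V := hUV.summands_right α γ hαγ hK
  obtain ⟨r', hr'⟩ := hUV.ext1 hZ hK' j' p' h'
  obtain ⟨σ, hσ⟩ := E.retr_to_sect h' r' hr'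
  refine ⟨σ ≫ q, ?_⟩
  rw [Category.assoc, ← hpb.w, ← Category.assoc, hσ, Category.id_comp]

/-- Extension lemma: a map to an object of `V` extends along an inflation whose cokernel
is in `U`. -/
lemma extend_lemma {U V : Set C} (hUV : IsCotorsionPair E U V)
    {A M N : C} {i : A ⟶ M} {p : M ⟶ N} (h : E.ses i p) (hN : N ∈ U)
    {Z : C} (hZ : Z ∈ V) (g : A ⟶ Z) : ∃ k : M ⟶ Z, i ≫ k = g := by
  obtain ⟨Y', i', g', ⟨C'', d'', h''⟩, hpo⟩ := E.pushout_infl h g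
  -- comparison map `e' : Y' ⟶ N`
  have hew : i ≫ p = g ≫ (0 : Z ⟶ N) := by rw [E.comp_zero h, Limits.comp_zero]
  set e' : Y' ⟶ N := hpo.desc p 0 hew with he'
  have hge' : g' ≫ e' = p := by rw [he', hpo.inl_desc]
  have hie' : i' ≫ e' = 0 := by rw [he', hpo.inr_desc]
  -- `ρ : C'' ⟶ N`
  obtain ⟨ρ, hρ, -⟩ := E.is_cokernel h'' e' hie'
  -- `τ : N ⟶ C''`
  obtain ⟨τ, hτ, -⟩ := E.is_cokernel h (g' ≫ d'')
    (by rw [← Category.assoc, hpo.w, Category.assoc, E.comp_zero h'', Limits.comp_zero])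
  have hρτ : ρ ≫ τ = 𝟙 C'' := by
    refine E.ses_epi h'' _ _ ?_
    rw [← Category.assoc, hρ, Category.comp_id]
    refine hpo.hom_ext ?_ ?_
    · rw [← Category.assoc, hge', hτ]
    · rw [← Category.assoc, hie', Limits.zero_comp, E.comp_zero h'']
  have hC'' : C'' ∈ U := hUV.summands_left ρ τ hρτ hN
  obtain ⟨r', hr'⟩ := hUV.ext1 hC'' hZ i' d'' h''
  refine ⟨g' ≫ r', ?_⟩
  rw [← Category.assoc, hpo.w, Category.assoc, hr', Category.comp_id]

end Aux

/-- for the coreflection `b⁺ : B → B⁺`, the following are equivalent: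
`B⁺ ∈ W`; `B ∈ U`; the image of `b⁺` in `B/W` is zero. -/
theorem coreflection_vanishing_tfae
    (E : ExactStructure C) (hP : E.EnoughProj) (hI : E.EnoughInj)
    {S T U V : Set C} (hST : IsCotorsionPair E S T) (hUV : IsCotorsionPair E U V)
    (hSU : S ⊆ U)
    {B VB UB TU SU Bp : C}
    (vb : VB ⟶ UB) (d : UB ⟶ B) (u : UB ⟶ TU) (sU : TU ⟶ SU)
    (t : TU ⟶ Bp) (bp : B ⟶ Bp) (sp : Bp ⟶ SU)
    (h1 : E.ses vb d) (hVB : VB ∈ V) (hUB : UB ∈ U)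
    (h2 : E.ses u sU) (hTU : TU ∈ T ∩ U) (hSUmem : SU ∈ S)
    (h3 : E.ses bp sp) (hPO : IsPushout u d t bp) :
    (Bp ∈ T ∩ U ↔ B ∈ U) ∧ (B ∈ U ↔ FactorsThru (T ∩ U) bp) := by
  -- The composite inflation `VB ⟶ TU` with cokernel `Z₀`
  obtain ⟨Z₀, d₀, h₀⟩ := E.infl_comp vb u ⟨B, d, h1⟩ ⟨SU, sU, h2⟩
  have hvbut : (vb ≫ u) ≫ t = 0 := by
    rw [Category.assoc, hPO.w, ← Category.assoc, E.comp_zero h1, Limits.zero_comp]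
  -- `φ : Z₀ ⟶ Bp` and its inverse `ψ`
  obtain ⟨φ, hφ, -⟩ := E.is_cokernel h₀ t hvbut
  obtain ⟨h₁', hh₁', -⟩ := E.is_cokernel h1 (u ≫ d₀)
    (by rw [← Category.assoc, E.comp_zero h₀])
  set ψ : Bp ⟶ Z₀ := hPO.desc d₀ h₁' hh₁'.symm with hψdef
  have htψ : t ≫ ψ = d₀ := by rw [hψdef, hPO.inl_desc]
  have hbpψ : bp ≫ ψ = h₁' := by rw [hψdef, hPO.inr_desc]
  have hφψ : φ ≫ ψ = 𝟙 Z₀ := by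
    refine E.ses_epi h₀ _ _ ?_
    rw [← Category.assoc, hφ, htψ, Category.comp_id]
  have hψφ : ψ ≫ φ = 𝟙 Bp := by
    refine hPO.hom_ext ?_ ?_
    · rw [← Category.assoc, htψ, hφ, Category.comp_id]
    · rw [← Category.assoc, hbpψ, Category.comp_id]
      refine E.ses_epi h1 _ _ ?_
      rw [← Category.assoc, hh₁', Category.assoc, hφ, hPO.w]
  -- comparison `e : Bp ⟶ SU` with `t ≫ e = sU` and `bp ≫ e = 0`
  have hew : u ≫ sU = d ≫ (0 : B ⟶ SU) := by rw [E.comp_zero h2, Limits.comp_zero]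
  set e : Bp ⟶ SU := hPO.desc sU 0 hew with hedef
  have hte : t ≫ e = sU := by rw [hedef, hPO.inl_desc]
  have hbpe : bp ≫ e = 0 := by rw [hedef, hPO.inr_desc]
  -- key step: any factorization of `bp` through `t` yields `B ∈ U`
  have key : ∀ x : B ⟶ TU, x ≫ t = bp → B ∈ U := by
    intro x hx
    have hxsU : x ≫ sU = 0 := by rw [← hte, ← Category.assoc, hx, hbpe]
    obtain ⟨z, hz, -⟩ := E.is_kernel h2 x hxsU
    have hzd : z ≫ d = 𝟙 B := by
      refine E.ses_mono h3 _ _ ?_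
      rw [Category.assoc, ← hPO.w, ← Category.assoc, hz, hx, Category.id_comp]
    exact hUV.summands_left z d hzd hUB
  constructor
  · constructor
    · -- (a) ⇒ (b)
      rintro ⟨-, hBpU⟩
      have hZ₀U : Z₀ ∈ U := hUV.summands_left φ ψ hφψ hBpU
      obtain ⟨r, hr⟩ := hUV.ext1 hZ₀U hVB (vb ≫ u) d₀ h₀
      obtain ⟨σ, hσ⟩ := E.retr_to_sect h₀ r hr
      refine key (bp ≫ ψ ≫ σ) ?_
      rw [Category.assoc, Category.assoc, ← hφ, ← Category.assoc σ, hσ,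
        Category.id_comp, ← Category.assoc, Category.assoc, hψφ, Category.comp_id]
    · -- (b) ⇒ (a)
      intro hB
      obtain ⟨r0, hr0⟩ := hUV.ext1 hB hVB vb d h1
      obtain ⟨r, hrext⟩ := extend_lemma E hUV h2 (hSU hSUmem) hVB r0
      have hretr : (vb ≫ u) ≫ r = 𝟙 VB := by rw [Category.assoc, hrext, hr0]
      obtain ⟨σ, hσ⟩ := E.retr_to_sect h₀ r hretr
      have hst : (ψ ≫ σ) ≫ t = 𝟙 Bp := by
        rw [Category.assoc, ← hφ, ← Category.assoc σ, hσ, Category.id_comp, hψφ]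
      exact ⟨hST.summands_right (ψ ≫ σ) t hst hTU.1,
        hUV.summands_left (ψ ≫ σ) t hst hTU.2⟩
  · constructor
    · -- (b) ⇒ (c)
      intro hB
      obtain ⟨r0, hr0⟩ := hUV.ext1 hB hVB vb d h1
      obtain ⟨s0, hs0⟩ := E.retr_to_sect h1 r0 hr0
      refine ⟨TU, s0 ≫ u, t, hTU, ?_⟩
      rw [Category.assoc, hPO.w, ← Category.assoc, hs0, Category.id_comp]
    · -- (c) ⇒ (b)
      rintro ⟨Z, f, g, hZW, hfg⟩
      obtain ⟨l, hl⟩ := lift_lemma E hUV h₀ hVB hZW.2 (g ≫ ψ)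
      refine key (f ≫ l) ?_
      rw [Category.assoc, ← hφ, ← Category.assoc l, hl, Category.assoc,
        hψφ, Category.comp_id, hfg]
end

section
/- Let (S,T),(U,V) be a twin cotorsion pair on B, and f : A → B a morphism with A ∈ B⁻. Let c_f : B → C_f be constructed as the push-out of f along the approximation A ↣ W^A ↠ S^A. Then for any object C and any morphism g : B → C whose composite g∘f factors through W, there exists c : C_f → C with c∘c_f = g; moreover if C ∈ B⁺, then c is unique in the quotient category B/W. -/
open CategoryTheory Limits

universe v u

variable {C : Type u} [Category.{v} C] [Preadditive C] [HasBinaryBiproducts C]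

/-- for `f : A → B` with `A ∈ B⁻` and `c_f : B → C_f` the push-out of `f`
along `A ↣ W^A`, any `g : B → C` with `g∘f` factoring through `W` factors as `g = c∘c_f`;
and `c` is unique modulo `W` whenever `C ∈ B⁺`. -/
theorem cokernel_construction_universal_property
    (E : ExactStructure C) (hP : E.EnoughProj) (hI : E.EnoughInj)
    {S T U V : Set C} (hST : IsCotorsionPair E S T) (hUV : IsCotorsionPair E U V)
    (hSU : S ⊆ U)
    {A B WA SA Cf : C} (f : A ⟶ B)
    (wA : A ⟶ WA) (sA : WA ⟶ SA) (hses1 : E.ses wA sA)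
    (hWA : WA ∈ T ∩ U) (hSA : SA ∈ S)
    (g' : WA ⟶ Cf) (cf : B ⟶ Cf) (s : Cf ⟶ SA)
    (hses2 : E.ses cf s) (hPO : IsPushout wA f g' cf)
    (D : C) (gm : B ⟶ D) (hgf : FactorsThru (T ∩ U) (f ≫ gm)) :
    (∃ c : Cf ⟶ D, cf ≫ c = gm) ∧
    (D ∈ BPlus E V (T ∩ U) → ∀ c c' : Cf ⟶ D, cf ≫ c = gm → cf ≫ c' = gm →
      FactorsThru (T ∩ U) (c - c')) := by

  constructor
  · -- Existence
    obtain ⟨Z, u, v, hZ, huv⟩ := hgf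
    obtain ⟨M, i', u', ⟨Z', d', hses3⟩, hPO2⟩ := E.pushout_infl hses1 u
    -- t : M ⟶ SA from the pushout
    have h0 : wA ≫ sA = u ≫ (0 : Z ⟶ SA) := by
      rw [E.comp_zero hses1, comp_zero]
    have hu't : u' ≫ hPO2.desc sA 0 h0 = sA := hPO2.inl_desc _ _ _
    have hi't : i' ≫ hPO2.desc sA 0 h0 = 0 := hPO2.inr_desc _ _ _
    obtain ⟨h, hh, -⟩ := E.is_cokernel hses3 (hPO2.desc sA 0 h0) hi't
    have hwud : wA ≫ (u' ≫ d') = 0 := by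
      rw [← Category.assoc, hPO2.w, Category.assoc, E.comp_zero hses3, comp_zero]
    obtain ⟨k, hk, -⟩ := E.is_cokernel hses1 (u' ≫ d') hwud
    have htk : hPO2.desc sA 0 h0 ≫ k = d' := by
      apply hPO2.hom_ext
      · rw [← Category.assoc, hu't, hk]
      · rw [← Category.assoc, hi't, zero_comp]
        exact (E.comp_zero hses3).symm
    obtain ⟨x, -, hxuniq⟩ := E.is_cokernel hses3 d' (E.comp_zero hses3)
    have hhk : h ≫ k = 𝟙 Z' := by
      rw [hxuniq (h ≫ k) (by show d' ≫ (h ≫ k) = d'; rw [← Category.assoc, hh, htk]),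
          hxuniq (𝟙 Z') (by simp)]
    have hZ'S : Z' ∈ S := hST.summands_left h k hhk hSA
    obtain ⟨r, hr⟩ := hST.ext1 hZ'S hZ.1 i' d' hses3
    have hwAe : wA ≫ (u' ≫ r) = u := by
      rw [← Category.assoc, hPO2.w, Category.assoc, hr, Category.comp_id]
    have hcomm : wA ≫ ((u' ≫ r) ≫ v) = f ≫ gm := by
      rw [← Category.assoc, hwAe, huv]
    exact ⟨hPO.desc ((u' ≫ r) ≫ v) gm hcomm, hPO.inr_desc _ _ _⟩
  · -- Uniqueness modulo W
    rintro ⟨V', W', i, d, hV', hW', hses4⟩ c c' hc hc'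
    have hδ : cf ≫ (c - c') = 0 := by rw [Preadditive.comp_sub, hc, hc', sub_self]
    obtain ⟨q, hq, -⟩ := E.is_cokernel hses2 (c - c') hδ
    obtain ⟨Y', d'', gg, ⟨X', i'', hses5⟩, hPB⟩ := E.pullback_defl hses4 q
    -- m : X' ⟶ V'
    have him : (i'' ≫ gg) ≫ d = 0 := by
      rw [Category.assoc, ← hPB.w, ← Category.assoc, E.comp_zero hses5, zero_comp]
    obtain ⟨m, hm, -⟩ := E.is_kernel hses4 (i'' ≫ gg) him
    -- n : V' ⟶ X'
    have hw0 : (0 : V' ⟶ SA) ≫ q = i ≫ d := by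
      rw [zero_comp, E.comp_zero hses4]
    have hn'1 : hPB.lift 0 i hw0 ≫ d'' = 0 := hPB.lift_fst _ _ _
    have hn'2 : hPB.lift 0 i hw0 ≫ gg = i := hPB.lift_snd _ _ _
    obtain ⟨n, hn, -⟩ := E.is_kernel hses5 (hPB.lift 0 i hw0) hn'1
    have hmn' : m ≫ hPB.lift 0 i hw0 = i'' := by
      apply hPB.hom_ext
      · rw [Category.assoc, hn'1, comp_zero, E.comp_zero hses5]
      · rw [Category.assoc, hn'2, hm]
    obtain ⟨y, -, hyuniq⟩ := E.is_kernel hses5 i'' (E.comp_zero hses5)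
    have hmn : m ≫ n = 𝟙 X' := by
      rw [hyuniq (m ≫ n) (by show (m ≫ n) ≫ i'' = i''; rw [Category.assoc, hn, hmn']),
          hyuniq (𝟙 X') (by simp)]
    have hX'V : X' ∈ V := hUV.summands_right m n hmn hV'
    obtain ⟨rr, hrr⟩ := hUV.ext1 (hSU hSA) hX'V i'' d'' hses5
    -- section of d''
    have he0 : i'' ≫ (𝟙 Y' - rr ≫ i'') = 0 := by
      rw [Preadditive.comp_sub, Category.comp_id, ← Category.assoc, hrr, Category.id_comp, sub_self]
    obtain ⟨σ, hσ, -⟩ := E.is_cokernel hses5 (𝟙 Y' - rr ≫ i'') he0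
    obtain ⟨z, -, hzuniq⟩ := E.is_cokernel hses5 d'' (E.comp_zero hses5)
    have hσd : σ ≫ d'' = 𝟙 SA := by
      have h1 : d'' ≫ (σ ≫ d'') = d'' := by
        rw [← Category.assoc, hσ, Preadditive.sub_comp, Category.id_comp, Category.assoc,
            E.comp_zero hses5, comp_zero, sub_zero]
      rw [hzuniq (σ ≫ d'') h1, hzuniq (𝟙 SA) (by simp)]
    have hfac : (σ ≫ gg) ≫ d = q := by
      rw [Category.assoc, ← hPB.w, ← Category.assoc, hσd, Category.id_comp]
    exact ⟨W', s ≫ (σ ≫ gg), d, hW', by rw [Category.assoc, hfac, hq]⟩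
end

section
/- Let (S,T),(U,V) be a twin cotorsion pair on B and let A ↣ B ↠ C be a short exact sequence with A ∈ H = B⁺ ∩ B⁻ (in particular A ∈ B⁻). If the deflation B ↠ C factors through an object of U, then the image of the inflation A ↣ B in the heart H/W is an epimorphism. -/
open CategoryTheory Limits

universe v u

variable {C : Type u} [Category.{v} C] [Preadditive C] [HasBinaryBiproducts C]

namespace ExactStructure

variable (E : ExactStructure C)

lemma infl_mono {X Y Z : C} {i : X ⟶ Y} {d : Y ⟶ Z} (h : E.ses i d)
    {W : C} {a b : W ⟶ X} (hab : a ≫ i = b ≫ i) : a = b := by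
  obtain ⟨c, hc, hu⟩ := E.is_kernel h (a ≫ i)
    (by rw [Category.assoc, E.comp_zero h, Limits.comp_zero])
  rw [hu a rfl, hu b hab.symm]

lemma defl_epi {X Y Z : C} {i : X ⟶ Y} {d : Y ⟶ Z} (h : E.ses i d)
    {W : C} {a b : Z ⟶ W} (hab : d ≫ a = d ≫ b) : a = b := by
  obtain ⟨c, hc, hu⟩ := E.is_cokernel h (d ≫ a)
    (by rw [← Category.assoc, E.comp_zero h, Limits.zero_comp])
  rw [hu a rfl, hu b hab.symm]

lemma sec_of_retr {K M X : C} {i : K ⟶ M} {d : M ⟶ X} (h : E.ses i d)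
    {ρ : M ⟶ K} (hρ : i ≫ ρ = 𝟙 K) : ∃ σ : X ⟶ M, σ ≫ d = 𝟙 X := by
  obtain ⟨τ, hτ, -⟩ := E.is_cokernel h (𝟙 M - ρ ≫ i)
    (by rw [Preadditive.comp_sub, Category.comp_id, ← Category.assoc, hρ, Category.id_comp, sub_self])
  refine ⟨τ, E.defl_epi h ?_⟩
  rw [← Category.assoc, hτ, Preadditive.sub_comp, Category.id_comp, Category.assoc,
    E.comp_zero h, Limits.comp_zero, sub_zero, Category.comp_id]

lemma retr_of_sec {K M X : C} {i : K ⟶ M} {d : M ⟶ X} (h : E.ses i d)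
    {σ : X ⟶ M} (hσ : σ ≫ d = 𝟙 X) : ∃ ρ : M ⟶ K, i ≫ ρ = 𝟙 K := by
  obtain ⟨ρ, hρ, -⟩ := E.is_kernel h (𝟙 M - d ≫ σ)
    (by rw [Preadditive.sub_comp, Category.id_comp, Category.assoc, hσ, Category.comp_id, sub_self])
  refine ⟨ρ, E.infl_mono h ?_⟩
  rw [Category.assoc, hρ, Preadditive.comp_sub, Category.comp_id, ← Category.assoc,
    E.comp_zero h, Limits.zero_comp, sub_zero, Category.id_comp]

/-- Pullback of a conflation along a morphism, with identification of the kernel. -/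
lemma pullback_pack {K M Y : C} {i : K ⟶ M} {d : M ⟶ Y} (h : E.ses i d)
    {Y' : C} (j : Y' ⟶ Y) :
    ∃ (M' : C) (d' : M' ⟶ Y') (hM : M' ⟶ M) (K' : C) (i' : K' ⟶ M')
      (κ : K' ⟶ K) (μ : K ⟶ K'),
      E.ses i' d' ∧ IsPullback d' hM j d ∧ i' ≫ hM = κ ≫ i ∧
        κ ≫ μ = 𝟙 K' ∧ μ ≫ κ = 𝟙 K := by
  obtain ⟨M', d', hM, ⟨K', i', hses'⟩, hpb⟩ := E.pullback_defl h j
  obtain ⟨κ, hκ, -⟩ := E.is_kernel h (i' ≫ hM)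
    (by rw [Category.assoc, ← hpb.w, ← Category.assoc, E.comp_zero hses', Limits.zero_comp])
  have hlam0 : (0 : K ⟶ Y') ≫ j = i ≫ d := by rw [Limits.zero_comp, E.comp_zero h]
  set lam : K ⟶ M' := hpb.lift 0 i hlam0 with hlamdef
  obtain ⟨μ, hμ, -⟩ := E.is_kernel hses' lam (by rw [hlamdef, hpb.lift_fst])
  have hμκ : μ ≫ κ = 𝟙 K := by
    apply E.infl_mono h
    rw [Category.assoc, hκ, ← Category.assoc, hμ, hlamdef, hpb.lift_snd, Category.id_comp]
  have hκμ : κ ≫ μ = 𝟙 K' := by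
    have key : (κ ≫ μ) ≫ i' = i' := by
      apply hpb.hom_ext
      · simp [E.comp_zero hses']
      · simp only [Category.assoc]
        rw [← Category.assoc μ, hμ, hlamdef, hpb.lift_snd]
        exact hκ
    exact E.infl_mono hses' (by rw [key, Category.id_comp])
  exact ⟨M', d', hM, K', i', κ, μ, hses', hpb, hκ.symm, hκμ, hμκ⟩

/-- Pushout of a conflation along a morphism, with identification of the cokernel. -/
lemma pushout_pack {X Y Zc : C} {i : X ⟶ Y} {d : Y ⟶ Zc} (h : E.ses i d)
    {X' : C} (u : X ⟶ X') :
    ∃ (P : C) (j : X' ⟶ P) (g' : Y ⟶ P) (ZP : C) (dP : P ⟶ ZP)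
      (ψ : Zc ⟶ ZP) (χ : ZP ⟶ Zc),
      E.ses j dP ∧ IsPushout i u g' j ∧ d ≫ ψ = g' ≫ dP ∧
        ψ ≫ χ = 𝟙 Zc ∧ χ ≫ ψ = 𝟙 ZP := by
  obtain ⟨P, j, g', ⟨ZP, dP, hses'⟩, hpo⟩ := E.pushout_infl h u
  obtain ⟨ψ, hψ, -⟩ := E.is_cokernel h (g' ≫ dP)
    (by rw [← Category.assoc, hpo.w, Category.assoc, E.comp_zero hses', Limits.comp_zero])
  have hε : i ≫ d = u ≫ (0 : X' ⟶ Zc) := by rw [E.comp_zero h, Limits.comp_zero]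
  set ε : P ⟶ Zc := hpo.desc d 0 hε with hεdef
  obtain ⟨χ, hχ, -⟩ := E.is_cokernel hses' ε (by rw [hεdef, hpo.inr_desc])
  have hψχ : ψ ≫ χ = 𝟙 Zc := by
    apply E.defl_epi h
    rw [← Category.assoc, hψ, Category.assoc, hχ, hεdef, hpo.inl_desc, Category.comp_id]
  have hχψ : χ ≫ ψ = 𝟙 ZP := by
    apply E.defl_epi hses'
    rw [← Category.assoc, hχ, Category.comp_id]
    apply hpo.hom_ext
    · rw [← Category.assoc, hεdef, hpo.inl_desc, hψ]
    · rw [← Category.assoc, hεdef, hpo.inr_desc, Limits.zero_comp, E.comp_zero hses']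
  exact ⟨P, j, g', ZP, dP, ψ, χ, hses', hpo, hψ, hψχ, hχψ⟩

/-- `Ext^1(X, K) = 0` for every `K ∈ V`, in splitting form. -/
def GoodExt (V : Set C) (X : C) : Prop :=
  ∀ ⦃K M : C⦄ (i : K ⟶ M) (d : M ⟶ X), K ∈ V → E.ses i d → ∃ r : M ⟶ K, i ≫ r = 𝟙 K

lemma good_lift {V : Set C} (hsum : ClosedUnderSummands V)
    {K I SK : C} {ι : K ⟶ I} {c : I ⟶ SK} (hc : E.ses ι c) (hK : K ∈ V)
    {X : C} (hX : E.GoodExt V X) (ξ : X ⟶ SK) : ∃ lam : X ⟶ I, lam ≫ c = ξ := by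
  obtain ⟨M', d', hM, K', i', κ, μ, hses', hpb, hcomm, hκμ, hμκ⟩ := E.pullback_pack hc ξ
  have hK' : K' ∈ V := hsum κ μ hκμ hK
  obtain ⟨ρ, hρ⟩ := hX i' d' hK' hses'
  obtain ⟨σ, hσ⟩ := E.sec_of_retr hses' hρ
  refine ⟨σ ≫ hM, ?_⟩
  rw [Category.assoc, ← hpb.w, ← Category.assoc, hσ, Category.id_comp]

lemma good_iso {V : Set C} (hsum : ClosedUnderSummands V) {Z Z' : C}
    (ψ : Z ⟶ Z') (χ : Z' ⟶ Z) (hψχ : ψ ≫ χ = 𝟙 Z) (hχψ : χ ≫ ψ = 𝟙 Z')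
    (hZ : E.GoodExt V Z) : E.GoodExt V Z' := by
  intro K M j e hK hs
  obtain ⟨M₂, e₂, h₂, K₂, i₂, κ, μ, hses₂, hpb, hcomm, hκμ, hμκ⟩ := E.pullback_pack hs ψ
  have hK₂ : K₂ ∈ V := hsum κ μ hκμ hK
  obtain ⟨ρ₂, hρ₂⟩ := hZ i₂ e₂ hK₂ hses₂
  obtain ⟨σ₂, hσ₂⟩ := E.sec_of_retr hses₂ hρ₂
  have hsec : (χ ≫ σ₂ ≫ h₂) ≫ e = 𝟙 Z' := by
    rw [Category.assoc, Category.assoc, ← hpb.w, ← Category.assoc σ₂, hσ₂,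
      Category.id_comp, hχψ]
  exact E.retr_of_sec hs hsec

lemma good_ext {V : Set C} (hsum : ClosedUnderSummands V) (hInj : E.EnoughInj)
    {X₁ X₂ X₃ : C} {a : X₁ ⟶ X₂} {b : X₂ ⟶ X₃} (hab : E.ses a b)
    (h1 : E.GoodExt V X₁) (h3 : E.GoodExt V X₃) : E.GoodExt V X₂ := by
  intro K M i d hK hs
  obtain ⟨I, ι, hIinj, hinfl⟩ := hInj K
  obtain ⟨SK, c, hc⟩ := hinfl
  obtain ⟨J, hJ⟩ := hIinj i ⟨X₂, d, hs⟩ ι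
  obtain ⟨ξ, hξ, -⟩ := E.is_cokernel hs (J ≫ c)
    (by rw [← Category.assoc, hJ, E.comp_zero hc])
  obtain ⟨lam1, hlam1⟩ := E.good_lift hsum hc hK h1 (a ≫ ξ)
  obtain ⟨Λ, hΛ⟩ := hIinj a ⟨X₃, b, hab⟩ lam1
  obtain ⟨ξ₃, hξ₃, -⟩ := E.is_cokernel hab (ξ - Λ ≫ c)
    (by rw [Preadditive.comp_sub, ← Category.assoc, hΛ, hlam1, sub_self])
  obtain ⟨lam3, hlam3⟩ := E.good_lift hsum hc hK h3 ξ₃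
  have hlc : (Λ + b ≫ lam3) ≫ c = ξ := by
    rw [Preadditive.add_comp, Category.assoc, hlam3, hξ₃]
    abel
  obtain ⟨ρ, hρ, -⟩ := E.is_kernel hc (J - d ≫ (Λ + b ≫ lam3))
    (by rw [Preadditive.sub_comp, Category.assoc, hlc, hξ, sub_self])
  refine ⟨ρ, E.infl_mono hc ?_⟩
  rw [Category.assoc, hρ, Preadditive.comp_sub, hJ, ← Category.assoc, E.comp_zero hs,
    zero_comp, sub_zero, Category.id_comp]

lemma lem_extend {V : Set C} (hsum : ClosedUnderSummands V)
    {X Y Zc : C} {i : X ⟶ Y} {d : Y ⟶ Zc} (h : E.ses i d)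
    {K : C} (u : X ⟶ K) (hK : K ∈ V) (hZc : E.GoodExt V Zc) :
    ∃ Φ : Y ⟶ K, i ≫ Φ = u := by
  obtain ⟨P, j, g', ZP, dP, ψ, χ, hses', hpo, hcomm, hψχ, hχψ⟩ := E.pushout_pack h u
  have hZP : E.GoodExt V ZP := E.good_iso hsum ψ χ hψχ hχψ hZc
  obtain ⟨ρ, hρ⟩ := hZP j dP hK hses'
  refine ⟨g' ≫ ρ, ?_⟩
  rw [← Category.assoc, hpo.w, Category.assoc, hρ, Category.comp_id]

end ExactStructure

/-- if `A ↣ B ↠ C` is a short exact sequence with `A, B` in the heart and the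
deflation factoring through `U`, then the inflation `A ↣ B` becomes an epimorphism in the
heart `(B⁺ ∩ B⁻)/W`. -/
theorem inflation_epi_in_heart
    (E : ExactStructure C) (hP : E.EnoughProj) (hI : E.EnoughInj)
    {S T U V : Set C} (hST : IsCotorsionPair E S T) (hUV : IsCotorsionPair E U V)
    (hSU : S ⊆ U)
    {A B D : C} (f : A ⟶ B) (g : B ⟶ D) (hses : E.ses f g)
    (hA : A ∈ BPlus E V (T ∩ U) ∩ BMinus E (T ∩ U) S)
    (hB : B ∈ BPlus E V (T ∩ U) ∩ BMinus E (T ∩ U) S)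
    (hfac : ∃ (U0 : C) (u1 : B ⟶ U0) (u2 : U0 ⟶ D), U0 ∈ U ∧ u1 ≫ u2 = g) :
    ∀ Q ∈ BPlus E V (T ∩ U) ∩ BMinus E (T ∩ U) S, ∀ r : B ⟶ Q,
      FactorsThru (T ∩ U) (f ≫ r) → FactorsThru (T ∩ U) r := by
  intro Q hQ r hr
  obtain ⟨Z, u, v, hZ, huv⟩ := hr
  obtain ⟨U0, u1, u2, hU0, hu12⟩ := hfac
  obtain ⟨W_A, S_A, w, d_A, hWA, hSA, hwdA⟩ := hA.2
  obtain ⟨V', W'', iQ, dQ, hV', hW'', hsesQ⟩ := hQ.1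
  have hsumW : ClosedUnderSummands (T ∩ U) := fun X Y s r' hsr hX =>
    ⟨hST.summands_right s r' hsr hX.1, hUV.summands_left s r' hsr hX.2⟩
  -- Step 1: extend u : A ⟶ Z along the inflation w : A ⟶ W_A
  have hGS : E.GoodExt T S_A := fun K M i' d' hKT hs => hST.ext1 hSA hKT i' d' hs
  obtain ⟨z, hz⟩ := E.lem_extend hST.summands_right hwdA u hZ.1 hGS
  -- Step 2: pushout of the conflation (f, g) along w
  obtain ⟨Ee, w', g', ZE, dE, ψE, χE, hsesE, hpoE, hcommE, hψχE, hχψE⟩ :=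
    E.pushout_pack hses w
  have hcone : f ≫ r = w ≫ (z ≫ v) := by
    rw [← huv, ← hz, Category.assoc]
  set ρ : Ee ⟶ Q := hpoE.desc r (z ≫ v) hcone with hρdef
  -- Step 3: pull the conflation (w', dE) back along u2 ≫ ψE
  obtain ⟨E₁, d₁, h₁, X₁, i₁, κ, μ, hsesE₁, hpbE₁, hcomm₁, hκμ, hμκ⟩ :=
    E.pullback_pack hsesE (u2 ≫ ψE)
  have hX₁ : X₁ ∈ T ∩ U := hsumW κ μ hκμ hWA
  have hβw : u1 ≫ (u2 ≫ ψE) = g' ≫ dE := by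
    rw [← Category.assoc, hu12, hcommE]
  set β : B ⟶ E₁ := hpbE₁.lift u1 g' hβw with hβdef
  -- Step 4: GoodExt V E₁
  have h1 : E.GoodExt V X₁ := fun K M i' d' hKV hs => hUV.ext1 hX₁.2 hKV i' d' hs
  have h3 : E.GoodExt V U0 := fun K M i' d' hKV hs => hUV.ext1 hU0 hKV i' d' hs
  have hE₁ : E.GoodExt V E₁ := E.good_ext hUV.summands_right hI hsesE₁ h1 h3
  -- Step 5: lift h₁ ≫ ρ through the deflation dQ
  obtain ⟨φ, hφ⟩ := E.good_lift hUV.summands_right hsesQ hV' hE₁ (h₁ ≫ ρ)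
  refine ⟨W'', β ≫ φ, dQ, hW'', ?_⟩
  rw [Category.assoc, hφ, ← Category.assoc, hβdef, hpbE₁.lift_snd, hρdef, hpoE.inl_desc]
end
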